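/- For every even integer k ≥ 2, the limit inferior as n → ∞ of (mi_k(n))^{k/n} is at least 36^{1/9} ≈ 1.489. (In particular, ζ_k^k ≥ 36^{1/9} whenever the limit ζ_k = lim_{n→∞} (mi_k(n))^{1/n} exists.) -/

import Mathlib

open SimpleGraph

/-- `D` is a `k`-dominating independent set of `G`: `D` is independent and every vertex
outside `D` has at least `k` neighbours in `D`. -/
def IsKDIS {V : Type*} [Fintype V] (G : SimpleGraph V) (k : ℕ) (D : Finset V) : Prop :=
  (∀ x ∈ D, ∀ y ∈ D, ¬ G.Adj x y) ∧
  ∀ v : V, v ∉ D → k ≤ (G.neighborSet v ∩ (D : Set V)).ncard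

/-- The number of `k`-dominating independent sets of `G`. -/
noncomputable def numKDIS {V : Type*} [Fintype V] (G : SimpleGraph V) (k : ℕ) : ℕ :=
  Nat.card {D : Finset V // IsKDIS G k D}

/-- `mi k n`: the maximum number of `k`-dominating independent sets in a simple graph
on `n` vertices. -/
noncomputable def mi (k n : ℕ) : ℕ :=
  sSup {m : ℕ | ∃ G : SimpleGraph (Fin n), numKDIS G k = m}

/-- `mDIS k t`: the smallest `n` such that some simple graph on `n` vertices has at least
`t` `k`-dominating independent sets. -/
noncomputable def mDIS (k t : ℕ) : ℕ :=
  sInf {n : ℕ | ∃ G : SimpleGraph (Fin n), t ≤ numKDIS G k}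

/-! ### Construction -/

abbrev Vtx (t m r : ℕ) := (Fin t × Fin 3 × Fin 3 × Fin m) ⊕ Fin r

def gadgetAdj (t m r : ℕ) : Vtx t m r → Vtx t m r → Prop
  | Sum.inl (i, a, b, _), Sum.inl (i', a', b', _) =>
      i = i' ∧ (a = a' ∨ b = b') ∧ ¬(a = a' ∧ b = b')
  | _, _ => False

def gadget (t m r : ℕ) : SimpleGraph (Vtx t m r) where
  Adj := gadgetAdj t m r
  symm := by
    refine ⟨?_⟩; rintro (⟨i, a, b, c⟩ | j) (⟨i', a', b', c'⟩ | j') h <;>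
      simp only [gadgetAdj] at * <;> tauto
  loopless := by
    refine ⟨?_⟩; rintro (⟨i, a, b, c⟩ | j) h <;> simp only [gadgetAdj] at h <;> tauto

def inD {t : ℕ} (m r : ℕ) (f : Fin t → Equiv.Perm (Fin 3)) : Vtx t m r → Prop
  | Sum.inl (i, a, b, _) => f i a = b
  | Sum.inr _ => True

instance {t m r : ℕ} (f : Fin t → Equiv.Perm (Fin 3)) : DecidablePred (inD m r f) :=
  fun v => match v with
  | Sum.inl (i, a, b, _) => inferInstanceAs (Decidable (f i a = b))
  | Sum.inr _ => inferInstanceAs (Decidable True)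

def Dset {t : ℕ} (m r : ℕ) (f : Fin t → Equiv.Perm (Fin 3)) : Finset (Vtx t m r) :=
  Finset.univ.filter (inD m r f)

lemma Dset_isKDIS {t m r : ℕ} (f : Fin t → Equiv.Perm (Fin 3)) :
    IsKDIS (gadget t m r) (2 * m) (Dset m r f) := by
  constructor
  · rintro (⟨i, a, b, c⟩ | j) hx (⟨i', a', b', c'⟩ | j') hy hadj <;>
      simp only [gadget, gadgetAdj] at hadj
    obtain ⟨hi, hor, hne⟩ := hadj
    subst hi
    simp only [Dset, Finset.mem_filter, inD] at hx hy
    rcases hor with h | h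
    · subst h; exact hne ⟨rfl, hx.2 ▸ hy.2 ▸ rfl⟩
    · subst h
      have : a = a' := (f i).injective (hx.2.trans hy.2.symm)
      exact hne ⟨this, rfl⟩
  · rintro (⟨i, a, b, c⟩ | j) hv
    · simp only [Dset, Finset.mem_filter, Finset.mem_univ, true_and, inD] at hv
      -- the witnessing finset
      set F : Finset (Vtx t m r) :=
        (Finset.univ.image fun c' : Fin m => (Sum.inl (i, a, f i a, c') : Vtx t m r)) ∪
        (Finset.univ.image fun c' : Fin m => (Sum.inl (i, (f i)⁻¹ b, b, c') : Vtx t m r)) with hF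
      have hinvne : (f i)⁻¹ b ≠ a := by
        intro h
        exact hv (by rw [← h]; exact (f i).apply_symm_apply b)
      have hsub : (F : Set (Vtx t m r)) ⊆
          (gadget t m r).neighborSet (Sum.inl (i, a, b, c)) ∩ (Dset m r f : Set (Vtx t m r)) := by
        intro x hx
        simp only [hF, Finset.coe_union, Finset.coe_image, Finset.coe_univ, Set.image_univ,
          Set.mem_union, Set.mem_range] at hx
        rcases hx with ⟨c', rfl⟩ | ⟨c', rfl⟩
        · constructor
          · rw [SimpleGraph.mem_neighborSet]
            exact (⟨rfl, Or.inl rfl, fun h => hv h.2.symm⟩ :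
              gadgetAdj t m r (Sum.inl (i, a, b, c)) (Sum.inl (i, a, f i a, c')))
          · simp [Dset, inD]
        · constructor
          · rw [SimpleGraph.mem_neighborSet]
            exact (⟨rfl, Or.inr rfl, fun h => hinvne h.1.symm⟩ :
              gadgetAdj t m r (Sum.inl (i, a, b, c)) (Sum.inl (i, (f i)⁻¹ b, b, c')))
          · simp [Dset, inD]
      have hcard : F.card = 2 * m := by
        rw [hF, Finset.card_union_of_disjoint, Finset.card_image_of_injective,
          Finset.card_image_of_injective] <;>
          [skip; (intro x y h; simpa using h); (intro x y h; simpa using h); skip]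
        · simp [two_mul]
        · simp only [Finset.disjoint_left, Finset.mem_image]
          rintro x ⟨c1, _, rfl⟩ ⟨c2, _, h⟩
          simp only [Sum.inl.injEq, Prod.mk.injEq] at h
          exact hv h.2.2.1.symm
      calc 2 * m = F.card := hcard.symm
        _ = (F : Set (Vtx t m r)).ncard := (Set.ncard_coe_finset F).symm
        _ ≤ _ := Set.ncard_le_ncard hsub (Set.toFinite _)
    · exact absurd (by simp [Dset, inD]) hv

lemma Dset_injective {t m r : ℕ} (hm : m ≠ 0) :
    Function.Injective (fun f : Fin t → Equiv.Perm (Fin 3) => Dset m r f) := by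
  intro f g h
  have h' : Dset m r f = Dset m r g := h
  funext i
  ext a
  have c0 : Fin m := ⟨0, Nat.pos_of_ne_zero hm⟩
  have hmem : (Sum.inl (i, a, f i a, c0) : Vtx t m r) ∈ Dset m r f := by
    simp [Dset, inD]
  rw [h'] at hmem
  have hga : g i a = f i a := by simpa [Dset, inD] using hmem
  simp [hga]

lemma numKDIS_gadget {t m r : ℕ} (hm : m ≠ 0) :
    6 ^ t ≤ numKDIS (gadget t m r) (2 * m) := by
  have hinj : Function.Injective
      (fun f : Fin t → Equiv.Perm (Fin 3) =>
        (⟨Dset m r f, Dset_isKDIS f⟩ : {D : Finset (Vtx t m r) // IsKDIS (gadget t m r) (2 * m) D})) := by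
    intro f g h
    exact Dset_injective hm (congrArg Subtype.val h)
  have := Nat.card_le_card_of_injective _ hinj
  rw [Nat.card_eq_fintype_card, Fintype.card_fun, Fintype.card_perm] at this
  simpa [numKDIS, Nat.factorial] using this

lemma numKDIS_comap_le {V W : Type*} [Fintype V] [Fintype W] [DecidableEq V] [DecidableEq W]
    (G : SimpleGraph W) (e : V ≃ W) (k : ℕ) :
    numKDIS G k ≤ numKDIS (G.comap e) k := by
  have key : ∀ D : Finset W, IsKDIS G k D →
      IsKDIS (G.comap e) k (D.image e.symm) := by
    intro D hD
    have hmem : ∀ x : V, x ∈ D.image e.symm ↔ e x ∈ D := by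
      intro x
      simp only [Finset.mem_image]
      constructor
      · rintro ⟨u, hu, rfl⟩; simpa using hu
      · intro h; exact ⟨e x, h, by simp⟩
    constructor
    · intro x hx y hy hadj
      exact hD.1 (e x) ((hmem x).1 hx) (e y) ((hmem y).1 hy) hadj
    · intro v hv
      have hv' : e v ∉ D := fun h => hv ((hmem v).2 h)
      have hset : (G.comap e).neighborSet v ∩ ((D.image e.symm : Finset V) : Set V)
          = e.symm '' (G.neighborSet (e v) ∩ (D : Set W)) := by
        ext x
        simp only [Set.mem_inter_iff, SimpleGraph.mem_neighborSet, SimpleGraph.comap_adj,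
          Finset.coe_image, Set.mem_image, Finset.mem_coe]
        constructor
        · rintro ⟨hadj, u, hu, rfl⟩
          exact ⟨u, ⟨by simpa using hadj, hu⟩, rfl⟩
        · rintro ⟨u, ⟨hadj, hu⟩, rfl⟩
          exact ⟨by simpa using hadj, u, hu, rfl⟩
      rw [hset, Set.ncard_image_of_injective _ e.symm.injective]
      exact hD.2 (e v) hv'
  have hinj : Function.Injective
      (fun D : {D : Finset W // IsKDIS G k D} =>
        (⟨D.1.image e.symm, key D.1 D.2⟩ : {D : Finset V // IsKDIS (G.comap e) k D})) := by
    rintro ⟨D, hDp⟩ ⟨D', hD'p⟩ h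
    simp only [Subtype.mk.injEq] at h ⊢
    exact Finset.image_injective e.symm.injective h
  exact Nat.card_le_card_of_injective _ hinj

lemma mi_lower (m n : ℕ) (hm : m ≠ 0) : 6 ^ (n / (9 * m)) ≤ mi (2 * m) n := by
  set t := n / (9 * m) with ht
  set r := n % (9 * m) with hr
  have hcard : Fintype.card (Fin n) = Fintype.card (Vtx t m r) := by
    have key : 9 * m * t + r = n := Nat.div_add_mod n (9 * m)
    simp only [Fintype.card_sum, Fintype.card_prod, Fintype.card_fin]
    rw [← key]; ring
  let e : Fin n ≃ Vtx t m r := Fintype.equivOfCardEq hcard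
  let G := (gadget t m r).comap ⇑e
  have h1 : 6 ^ t ≤ numKDIS G (2 * m) :=
    le_trans (numKDIS_gadget hm) (numKDIS_comap_le _ e _)
  refine h1.trans (le_csSup ?_ ⟨G, rfl⟩)
  refine ⟨Nat.card (Finset (Fin n)), ?_⟩
  rintro x ⟨H, rfl⟩
  exact Nat.card_le_card_of_injective _ Subtype.val_injective

lemma mi_le (k n : ℕ) : mi k n ≤ 2 ^ n := by
  have hne : {x : ℕ | ∃ G : SimpleGraph (Fin n), numKDIS G k = x}.Nonempty :=
    ⟨numKDIS (⊥ : SimpleGraph (Fin n)) k, ⟨⊥, rfl⟩⟩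
  apply csSup_le hne
  rintro x ⟨G, rfl⟩
  calc numKDIS G k ≤ Nat.card (Finset (Fin n)) :=
        Nat.card_le_card_of_injective _ Subtype.val_injective
    _ = 2 ^ n := by simp [Nat.card_eq_fintype_card]

theorem liminf_mi_pow_ge (k : ℕ) (hk : 2 ≤ k) (hke : Even k) :
    (36 : ℝ) ^ ((1 : ℝ) / 9) ≤
      Filter.atTop.liminf (fun n : ℕ => (mi k n : ℝ) ^ ((k : ℝ) / (n : ℝ))) := by
  obtain ⟨m, hm2⟩ := hke
  have hk2 : k = 2 * m := by omega
  have hm : m ≠ 0 := by omega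
  have hm1 : (1 : ℝ) ≤ (m : ℝ) := by exact_mod_cast Nat.one_le_iff_ne_zero.2 hm
  have hk1 : (k : ℝ) = 2 * m := by exact_mod_cast hk2
  have hh1 : ((9 * m : ℕ) : ℝ) = 9 * m := by push_cast; ring
  -- the exponent sequence tends to 2/9
  have hetend : Filter.Tendsto (fun n : ℕ => (k : ℝ) * ((n / (9 * m) : ℕ) : ℝ) / n)
      Filter.atTop (nhds (2 / 9)) := by
    have hlow : Filter.Tendsto (fun n : ℕ => 2 / 9 - (k : ℝ) / n) Filter.atTop
        (nhds (2 / 9)) := by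
      have := (tendsto_const_nhds (x := (2 / 9 : ℝ)) (f := Filter.atTop)).sub
        (tendsto_const_div_atTop_nhds_zero_nat (k : ℝ))
      simpa using this
    apply tendsto_of_tendsto_of_tendsto_of_le_of_le' hlow tendsto_const_nhds
    · filter_upwards [Filter.eventually_ge_atTop 1] with n hn
      have hn0 : (0 : ℝ) < (n : ℝ) := by exact_mod_cast hn
      have hTn : (n : ℝ) ≤ 9 * m * ((n / (9 * m) : ℕ) : ℝ) + 9 * m := by
        have h2 : n ≤ 9 * m * (n / (9 * m)) + 9 * m := by
          have h1 := Nat.div_add_mod n (9 * m)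
          have h3 : n % (9 * m) < 9 * m := Nat.mod_lt _ (by omega)
          omega
        calc (n : ℝ) ≤ ((9 * m * (n / (9 * m)) + 9 * m : ℕ) : ℝ) := by exact_mod_cast h2
          _ = 9 * m * ((n / (9 * m) : ℕ) : ℝ) + 9 * m := by push_cast; ring
      have key : (2 / 9 : ℝ) * n - k ≤ (k : ℝ) * ((n / (9 * m) : ℕ) : ℝ) := by
        rw [hk1]; nlinarith
      have heq : (2 / 9 - (k : ℝ) / n) = ((2 / 9) * n - k) / n := by field_simp
      rw [heq]
      gcongr
    · filter_upwards [Filter.eventually_ge_atTop 1] with n hn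
      have hn0 : (0 : ℝ) < (n : ℝ) := by exact_mod_cast hn
      have hTn : 9 * (m : ℝ) * ((n / (9 * m) : ℕ) : ℝ) ≤ n := by
        calc 9 * (m : ℝ) * ((n / (9 * m) : ℕ) : ℝ)
            = ((9 * m * (n / (9 * m)) : ℕ) : ℝ) := by push_cast; ring
          _ ≤ n := by exact_mod_cast Nat.mul_div_le n (9 * m)
      rw [div_le_iff₀ hn0, hk1]
      nlinarith
  have hutend : Filter.Tendsto
      (fun n : ℕ => (6 : ℝ) ^ ((k : ℝ) * ((n / (9 * m) : ℕ) : ℝ) / n))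
      Filter.atTop (nhds ((6 : ℝ) ^ ((2 : ℝ) / 9))) :=
    Filter.Tendsto.rpow tendsto_const_nhds hetend (Or.inl (by norm_num))
  have hle : ∀ᶠ n in Filter.atTop,
      (6 : ℝ) ^ ((k : ℝ) * ((n / (9 * m) : ℕ) : ℝ) / n) ≤
        (mi k n : ℝ) ^ ((k : ℝ) / (n : ℝ)) := by
    filter_upwards [Filter.eventually_ge_atTop 1] with n hn
    have hmi : (6 : ℝ) ^ (n / (9 * m) : ℕ) ≤ (mi k n : ℝ) := by
      have := mi_lower m n hm
      rw [← hk2] at this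
      exact_mod_cast this
    have h6 : (0 : ℝ) ≤ (6 : ℝ) ^ (n / (9 * m) : ℕ) := by positivity
    have hexp : (0 : ℝ) ≤ (k : ℝ) / n := by positivity
    calc (6 : ℝ) ^ ((k : ℝ) * ((n / (9 * m) : ℕ) : ℝ) / n)
        = ((6 : ℝ) ^ (n / (9 * m) : ℕ)) ^ ((k : ℝ) / n) := by
          rw [← Real.rpow_natCast (6 : ℝ) (n / (9 * m)), ← Real.rpow_mul (by norm_num)]
          congr 1
          ring
      _ ≤ (mi k n : ℝ) ^ ((k : ℝ) / n) := Real.rpow_le_rpow h6 hmi hexp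
  have hbdd : Filter.IsBoundedUnder (· ≥ ·) Filter.atTop
      (fun n : ℕ => (6 : ℝ) ^ ((k : ℝ) * ((n / (9 * m) : ℕ) : ℝ) / n)) :=
    hutend.isBoundedUnder_ge
  have hub : ∀ᶠ n : ℕ in Filter.atTop,
      (mi k n : ℝ) ^ ((k : ℝ) / (n : ℝ)) ≤ (2 : ℝ) ^ (k : ℝ) := by
    filter_upwards [Filter.eventually_ge_atTop 1] with n hn
    have hn0 : (0 : ℝ) < (n : ℝ) := by exact_mod_cast hn
    have h1 : (mi k n : ℝ) ≤ (2 : ℝ) ^ (n : ℕ) := by exact_mod_cast mi_le k n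
    calc (mi k n : ℝ) ^ ((k : ℝ) / (n : ℝ))
        ≤ ((2 : ℝ) ^ (n : ℕ)) ^ ((k : ℝ) / (n : ℝ)) :=
          Real.rpow_le_rpow (Nat.cast_nonneg _) h1 (by positivity)
      _ = (2 : ℝ) ^ ((n : ℝ) * ((k : ℝ) / (n : ℝ))) := by
          rw [← Real.rpow_natCast (2 : ℝ) n, ← Real.rpow_mul (by norm_num)]
      _ = (2 : ℝ) ^ (k : ℝ) := by
          congr 1
          field_simp
  have hcob : Filter.IsCoboundedUnder (· ≥ ·) Filter.atTop
      (fun n : ℕ => (mi k n : ℝ) ^ ((k : ℝ) / (n : ℝ))) :=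
    (Filter.isBoundedUnder_of_eventually_le hub).isCoboundedUnder_ge
  have h36 : (36 : ℝ) ^ ((1 : ℝ) / 9) = (6 : ℝ) ^ ((2 : ℝ) / 9) := by
    rw [show (36 : ℝ) = (6 : ℝ) ^ (2 : ℝ) by
        rw [show (2 : ℝ) = ((2 : ℕ) : ℝ) by norm_num, Real.rpow_natCast]; norm_num,
      ← Real.rpow_mul (by norm_num)]
    norm_num
  rw [h36, ← hutend.liminf_eq]
  exact Filter.liminf_le_liminf hle hbdd hcob
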